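/- Let (Ω, F, P) be a probability space and let A_n and B_n, n = 1, 2, 3, …, be sub-σ-fields of F such that the σ-fields A_n ∨ B_n, n = 1, 2, 3, …, are independent. Then α(⋁_{n=1}^∞ A_n, ⋁_{n=1}^∞ B_n) ≤ Σ_{n=1}^∞ α(A_n, B_n). -/

import Mathlib

open MeasureTheory ProbabilityTheory ENNReal Filter

noncomputable section

namespace StrongMixing

variable {Ω : Type*}

/-- The strong mixing (α) dependence coefficient between two sub-σ-fields. -/
def alphaDep {mΩ : MeasurableSpace Ω} (P : Measure Ω) (𝒜 𝒝 : MeasurableSpace Ω) : ℝ≥0∞ :=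
  ⨆ (A : Set Ω) (_ : MeasurableSet[𝒜] A) (B : Set Ω) (_ : MeasurableSet[𝒝] B),
    ENNReal.ofReal |(P (A ∩ B)).toReal - (P A).toReal * (P B).toReal|

/-- The uniform mixing (φ) dependence coefficient between two sub-σ-fields. -/
def phiDep {mΩ : MeasurableSpace Ω} (P : Measure Ω) (𝒜 𝒝 : MeasurableSpace Ω) : ℝ≥0∞ :=
  ⨆ (A : Set Ω) (_ : MeasurableSet[𝒜] A) (_ : 0 < P A) (B : Set Ω) (_ : MeasurableSet[𝒝] B),
    ENNReal.ofReal |(P (A ∩ B)).toReal / (P A).toReal - (P B).toReal|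

/-- The ψ dependence coefficient between two sub-σ-fields. -/
def psiDep {mΩ : MeasurableSpace Ω} (P : Measure Ω) (𝒜 𝒝 : MeasurableSpace Ω) : ℝ≥0∞ :=
  ⨆ (A : Set Ω) (_ : MeasurableSet[𝒜] A) (_ : 0 < P A)
    (B : Set Ω) (_ : MeasurableSet[𝒝] B) (_ : 0 < P B),
    ENNReal.ofReal |(P (A ∩ B)).toReal / ((P A).toReal * (P B).toReal) - 1|

/-- The ψ* dependence coefficient between two sub-σ-fields. -/
def psiStarDep {mΩ : MeasurableSpace Ω} (P : Measure Ω) (𝒜 𝒝 : MeasurableSpace Ω) : ℝ≥0∞ :=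
  ⨆ (A : Set Ω) (_ : MeasurableSet[𝒜] A) (_ : 0 < P A)
    (B : Set Ω) (_ : MeasurableSet[𝒝] B) (_ : 0 < P B),
    ENNReal.ofReal ((P (A ∩ B)).toReal / ((P A).toReal * (P B).toReal))

/-- The ψ' dependence coefficient between two sub-σ-fields (an infimum). -/
def psiPrimeDep {mΩ : MeasurableSpace Ω} (P : Measure Ω) (𝒜 𝒝 : MeasurableSpace Ω) : ℝ≥0∞ :=
  ⨅ (A : Set Ω) (_ : MeasurableSet[𝒜] A) (_ : 0 < P A)
    (B : Set Ω) (_ : MeasurableSet[𝒝] B) (_ : 0 < P B),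
    ENNReal.ofReal ((P (A ∩ B)).toReal / ((P A).toReal * (P B).toReal))

/-- `A : Fin I → Set Ω` is a finite measurable partition of `Ω` with pieces in `m`. -/
def IsPartition {I : ℕ} (m : MeasurableSpace Ω) (A : Fin I → Set Ω) : Prop :=
  (∀ i, MeasurableSet[m] (A i)) ∧ Pairwise (Function.onFun Disjoint A) ∧ (⋃ i, A i) = Set.univ

/-- The absolute regularity (β) dependence coefficient between two sub-σ-fields. -/
def betaDep {mΩ : MeasurableSpace Ω} (P : Measure Ω) (𝒜 𝒝 : MeasurableSpace Ω) : ℝ≥0∞ :=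
  ⨆ (I : ℕ) (J : ℕ) (A : Fin I → Set Ω) (B : Fin J → Set Ω)
    (_ : IsPartition 𝒜 A) (_ : IsPartition 𝒝 B),
    ENNReal.ofReal ((1 / 2) * ∑ i, ∑ j,
      |(P (A i ∩ B j)).toReal - (P (A i)).toReal * (P (B j)).toReal|)

/-- The coefficient of information `I(𝒜,𝒝)` between two sub-σ-fields. -/
def infoDep {mΩ : MeasurableSpace Ω} (P : Measure Ω) (𝒜 𝒝 : MeasurableSpace Ω) : ℝ≥0∞ :=
  ⨆ (I : ℕ) (J : ℕ) (A : Fin I → Set Ω) (B : Fin J → Set Ω)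
    (_ : IsPartition 𝒜 A) (_ : IsPartition 𝒝 B),
    ENNReal.ofReal (∑ i, ∑ j, (P (A i ∩ B j)).toReal *
      Real.log ((P (A i ∩ B j)).toReal / ((P (A i)).toReal * (P (B j)).toReal)))

/-- Covariance of two real random variables (defined via centered integrals). -/
def covP {mΩ : MeasurableSpace Ω} (P : Measure Ω) (f g : Ω → ℝ) : ℝ :=
  ∫ ω, (f ω - ∫ x, f x ∂P) * (g ω - ∫ x, g x ∂P) ∂P

/-- Variance of a real random variable. -/
def varP {mΩ : MeasurableSpace Ω} (P : Measure Ω) (f : Ω → ℝ) : ℝ := covP P f f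

/-- The maximal correlation (ρ) dependence coefficient between two sub-σ-fields. -/
def rhoDep {mΩ : MeasurableSpace Ω} (P : Measure Ω) (𝒜 𝒝 : MeasurableSpace Ω) : ℝ≥0∞ :=
  ⨆ (f : Ω → ℝ) (g : Ω → ℝ)
    (_ : Measurable[𝒜] f) (_ : Measurable[𝒝] g)
    (_ : MemLp f 2 P) (_ : MemLp g 2 P)
    (_ : 0 < varP P f) (_ : 0 < varP P g),
    ENNReal.ofReal |covP P f g / (Real.sqrt (varP P f) * Real.sqrt (varP P g))|

/-- ρ-mixing "except on small sets": the coefficient `ρ_cond`. -/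
def rhoCondDep {mΩ : MeasurableSpace Ω} (P : Measure Ω) (𝒜 𝒝 : MeasurableSpace Ω) : ℝ≥0∞ :=
  sInf ({1} ∪ {ε : ℝ≥0∞ | 0 < ε ∧ ε < 1 ∧ ∃ D : Set Ω, MeasurableSet[𝒜] D ∧
    1 - ε ≤ P D ∧ rhoDep (ProbabilityTheory.cond P D) 𝒜 𝒝 ≤ ε})

/-- σ-field generated by the `X k`, `k ≤ j`. -/
def sigmaLE (X : ℤ → Ω → ℝ) (j : ℤ) : MeasurableSpace Ω :=
  ⨆ k : ℤ, ⨆ _ : k ≤ j, MeasurableSpace.comap (X k) (inferInstance : MeasurableSpace ℝ)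

/-- σ-field generated by the `X k`, `k ≥ j`. -/
def sigmaGE (X : ℤ → Ω → ℝ) (j : ℤ) : MeasurableSpace Ω :=
  ⨆ k : ℤ, ⨆ _ : j ≤ k, MeasurableSpace.comap (X k) (inferInstance : MeasurableSpace ℝ)

/-- σ-field generated by the `X k`, `k ∈ S`. -/
def sigmaOn (X : ℤ → Ω → ℝ) (S : Set ℤ) : MeasurableSpace Ω :=
  ⨆ k ∈ S, MeasurableSpace.comap (X k) (inferInstance : MeasurableSpace ℝ)

/-- The α-mixing coefficients `α(n)` of a random sequence. -/
def alphaSeq {mΩ : MeasurableSpace Ω} (P : Measure Ω) (X : ℤ → Ω → ℝ) (n : ℕ) : ℝ≥0∞ :=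
  ⨆ j : ℤ, alphaDep P (sigmaLE X j) (sigmaGE X (j + n))

/-- The ρ-mixing coefficients `ρ(n)` of a random sequence. -/
def rhoSeq {mΩ : MeasurableSpace Ω} (P : Measure Ω) (X : ℤ → Ω → ℝ) (n : ℕ) : ℝ≥0∞ :=
  ⨆ j : ℤ, rhoDep P (sigmaLE X j) (sigmaGE X (j + n))

/-- The coefficients `ρ_cond(n)` of a random sequence. -/
def rhoCondSeq {mΩ : MeasurableSpace Ω} (P : Measure Ω) (X : ℤ → Ω → ℝ) (n : ℕ) : ℝ≥0∞ :=
  ⨆ j : ℤ, rhoCondDep P (sigmaLE X j) (sigmaGE X (j + n))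

/-- Strict stationarity: all shifts of the sequence have the same law on `ℝ^ℤ`. -/
def StrictlyStationary {mΩ : MeasurableSpace Ω} (P : Measure Ω) (X : ℤ → Ω → ℝ) : Prop :=
  ∀ n : ℤ, Measure.map (fun ω => fun k => X (k + n) ω) P
    = Measure.map (fun ω => fun k => X k ω) P

/-- The interlaced coefficients `α*(n)`. -/
def alphaStarSeq {mΩ : MeasurableSpace Ω} (P : Measure Ω) (X : ℤ → Ω → ℝ) (n : ℕ) : ℝ≥0∞ :=
  ⨆ (S : Set ℤ) (T : Set ℤ) (_ : S.Nonempty) (_ : T.Nonempty) (_ : Disjoint S T)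
    (_ : ∀ s ∈ S, ∀ t ∈ T, (n : ℤ) ≤ |s - t|),
    alphaDep P (sigmaOn X S) (sigmaOn X T)

/-- The interlaced coefficients `ρ*(n)`. -/
def rhoStarSeq {mΩ : MeasurableSpace Ω} (P : Measure Ω) (X : ℤ → Ω → ℝ) (n : ℕ) : ℝ≥0∞ :=
  ⨆ (S : Set ℤ) (T : Set ℤ) (_ : S.Nonempty) (_ : T.Nonempty) (_ : Disjoint S T)
    (_ : ∀ s ∈ S, ∀ t ∈ T, (n : ℤ) ≤ |s - t|),
    rhoDep P (sigmaOn X S) (sigmaOn X T)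

/-- The interlaced coefficients `β*(n)`. -/
def betaStarSeq {mΩ : MeasurableSpace Ω} (P : Measure Ω) (X : ℤ → Ω → ℝ) (n : ℕ) : ℝ≥0∞ :=
  ⨆ (S : Set ℤ) (T : Set ℤ) (_ : S.Nonempty) (_ : T.Nonempty) (_ : Disjoint S T)
    (_ : ∀ s ∈ S, ∀ t ∈ T, (n : ℤ) ≤ |s - t|),
    betaDep P (sigmaOn X S) (sigmaOn X T)

/-- `m`-dependence of a random sequence. -/
def MDependent {mΩ : MeasurableSpace Ω} (P : Measure Ω) (X : ℤ → Ω → ℝ) (m : ℕ) : Prop :=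
  ∀ j : ℤ, ProbabilityTheory.Indep (sigmaLE X j) (sigmaGE X (j + m + 1)) P

/-- Mixing in the ergodic-theoretic sense. -/
def MixingET {mΩ : MeasurableSpace Ω} (P : Measure Ω) (X : ℤ → Ω → ℝ) : Prop :=
  ∀ A B : Set (ℤ → ℝ), MeasurableSet A → MeasurableSet B →
    Tendsto (fun n : ℕ => P {ω | (fun k => X k ω) ∈ A ∧ (fun k => X (k + n) ω) ∈ B})
      atTop (nhds (P {ω | (fun k => X k ω) ∈ A} * P {ω | (fun k => X k ω) ∈ B}))

/-- The Markov property: past and future are conditionally independent given the present. -/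
def IsMarkovChain {mΩ : MeasurableSpace Ω} (P : Measure Ω) (X : ℤ → Ω → ℝ) : Prop :=
  ∀ j : ℤ, ∀ A B : Set Ω, MeasurableSet[sigmaLE X j] A → MeasurableSet[sigmaGE X j] B →
    MeasureTheory.condExp (MeasurableSpace.comap (X j) (inferInstance : MeasurableSpace ℝ)) P
        ((A ∩ B).indicator (fun _ => (1 : ℝ)))
      =ᵐ[P] fun ω =>
        (MeasureTheory.condExp (MeasurableSpace.comap (X j) (inferInstance : MeasurableSpace ℝ)) P
          (A.indicator (fun _ => (1 : ℝ))) ω) *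
        (MeasureTheory.condExp (MeasurableSpace.comap (X j) (inferInstance : MeasurableSpace ℝ)) P
          (B.indicator (fun _ => (1 : ℝ))) ω)


section Proof15

variable {mΩ : MeasurableSpace Ω} (P : Measure Ω) [IsProbabilityMeasure P]

lemma le_alphaDep {𝒜 𝒝 : MeasurableSpace Ω} {A B : Set Ω}
    (hA : MeasurableSet[𝒜] A) (hB : MeasurableSet[𝒝] B) :
    ENNReal.ofReal |(P (A ∩ B)).toReal - (P A).toReal * (P B).toReal| ≤ alphaDep P 𝒜 𝒝 := by
  simp only [alphaDep]
  exact le_iSup₂_of_le A hA (le_iSup₂_of_le B hB le_rfl)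

lemma alphaDep_le_one {𝒜 𝒝 : MeasurableSpace Ω} : alphaDep P 𝒜 𝒝 ≤ 1 := by
  simp only [alphaDep]
  refine iSup₂_le fun A _ => iSup₂_le fun B _ => ?_
  rw [show (1 : ℝ≥0∞) = ENNReal.ofReal 1 by simp]
  refine ENNReal.ofReal_le_ofReal ?_
  have h1 : ∀ S : Set Ω, (P S).toReal ≤ 1 := fun S => by
    simpa using ENNReal.toReal_mono one_ne_top (prob_le_one (μ := P) (s := S))
  have h0 : ∀ S : Set Ω, 0 ≤ (P S).toReal := fun S => ENNReal.toReal_nonneg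
  rw [abs_le]
  constructor <;> nlinarith [h1 (A ∩ B), h0 (A ∩ B), h1 A, h0 A, h1 B, h0 B]

lemma alphaDep_mono {𝒜 𝒜' 𝒝 𝒝' : MeasurableSpace Ω} (h1 : 𝒜 ≤ 𝒜') (h2 : 𝒝 ≤ 𝒝') :
    alphaDep P 𝒜 𝒝 ≤ alphaDep P 𝒜' 𝒝' := by
  simp only [alphaDep]
  exact iSup₂_le fun A hA => iSup₂_le fun B hB =>
    le_alphaDep P (h1 A hA) (h2 B hB)

lemma ennreal_pair_of_abs {a b c : ℝ≥0∞} (ha : a ≠ ∞) (hb : b ≠ ∞)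
    (h : ENNReal.ofReal |a.toReal - b.toReal| ≤ c) : a ≤ b + c ∧ b ≤ a + c := by
  rcases eq_or_ne c ∞ with hc | hc
  · simp [hc]
  have habs : |a.toReal - b.toReal| ≤ c.toReal :=
    (ENNReal.ofReal_le_iff_le_toReal hc).mp h
  rw [abs_le] at habs
  constructor
  · rw [← ENNReal.ofReal_toReal ha, ← ENNReal.ofReal_toReal hb, ← ENNReal.ofReal_toReal hc,
      ← ENNReal.ofReal_add ENNReal.toReal_nonneg ENNReal.toReal_nonneg]
    exact ENNReal.ofReal_le_ofReal (by linarith [habs.1, habs.2])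
  · rw [← ENNReal.ofReal_toReal ha, ← ENNReal.ofReal_toReal hb, ← ENNReal.ofReal_toReal hc,
      ← ENNReal.ofReal_add ENNReal.toReal_nonneg ENNReal.toReal_nonneg]
    exact ENNReal.ofReal_le_ofReal (by linarith [habs.1, habs.2])

lemma ennreal_abs_of_pair {a b c : ℝ≥0∞} (ha : a ≠ ∞) (hb : b ≠ ∞)
    (h1 : a ≤ b + c) (h2 : b ≤ a + c) :
    ENNReal.ofReal |a.toReal - b.toReal| ≤ c := by
  rcases eq_or_ne c ∞ with hc | hc
  · simp [hc]
  refine ENNReal.ofReal_le_of_le_toReal ?_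
  rw [abs_le]
  have k1 : a.toReal ≤ b.toReal + c.toReal := by
    rw [← ENNReal.toReal_add hb hc]
    exact ENNReal.toReal_mono (by finiteness) h1
  have k2 : b.toReal ≤ a.toReal + c.toReal := by
    rw [← ENNReal.toReal_add ha hc]
    exact ENNReal.toReal_mono (by finiteness) h2
  constructor <;> linarith

lemma meas_bounds {𝒜 𝒝 : MeasurableSpace Ω} {A B : Set Ω}
    (hA : MeasurableSet[𝒜] A) (hB : MeasurableSet[𝒝] B) :
    P (A ∩ B) ≤ P A * P B + alphaDep P 𝒜 𝒝 ∧
      P A * P B ≤ P (A ∩ B) + alphaDep P 𝒜 𝒝 := by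
  have h := le_alphaDep P hA hB
  rw [← ENNReal.toReal_mul] at h
  exact ennreal_pair_of_abs (measure_ne_top P _)
    (ENNReal.mul_ne_top (measure_ne_top P _) (measure_ne_top P _)) h

/-- Counting bound for the dyadic-type discretization. -/
lemma count_div_bounds (K : ℕ) (hK : 0 < K) {a : ℝ} (ha0 : 0 ≤ a) (ha1 : a ≤ 1) :
    (((Finset.range K).filter fun i : ℕ => ((i : ℝ) + 1) / K ≤ a).card : ℝ) / K ≤ a ∧
      a ≤ ((((Finset.range K).filter fun i : ℕ => ((i : ℝ) + 1) / K ≤ a).card : ℝ) + 1) / K := by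
  classical
  set s := (Finset.range K).filter fun i : ℕ => ((i : ℝ) + 1) / K ≤ a with hs
  have hKpos : (0 : ℝ) < K := by exact_mod_cast hK
  constructor
  · rcases s.eq_empty_or_nonempty with h | h
    · rw [h]; simpa using ha0
    · have hmax' := s.max'_mem h
      have hmax : s.max' h ∈ Finset.range K ∧ ((s.max' h : ℝ) + 1) / K ≤ a :=
        Finset.mem_filter.mp hmax'
      have hsub : s ⊆ Finset.range (s.max' h + 1) := fun i hi =>
        Finset.mem_range.mpr (Nat.lt_succ_of_le (Finset.le_max' s i hi))
      have hcard : s.card ≤ s.max' h + 1 := by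
        simpa using Finset.card_le_card hsub
      have hcard' : (s.card : ℝ) ≤ (s.max' h : ℝ) + 1 := by exact_mod_cast hcard
      calc (s.card : ℝ) / K ≤ ((s.max' h : ℝ) + 1) / K := by gcongr
        _ ≤ a := hmax.2
  · by_contra hcon
    push_neg at hcon
    have hlt1 : ((s.card : ℝ) + 1) / K < 1 := hcon.trans_le ha1
    have hltK : (s.card : ℝ) + 1 < K := by
      rwa [div_lt_one hKpos] at hlt1
    have hltKn : s.card + 1 < K := by exact_mod_cast hltK
    have hsub : Finset.range (s.card + 1) ⊆ s := by
      intro i hi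
      rw [Finset.mem_range] at hi
      rw [Finset.mem_filter, Finset.mem_range]
      refine ⟨lt_trans hi hltKn, ?_⟩
      have : (i : ℝ) + 1 ≤ (s.card : ℝ) + 1 := by
        have : (i : ℝ) ≤ (s.card : ℝ) := by exact_mod_cast Nat.lt_succ_iff.mp hi
        linarith
      calc ((i : ℝ) + 1) / K ≤ ((s.card : ℝ) + 1) / K := by gcongr
        _ ≤ a := le_of_lt hcon
    have := Finset.card_le_card hsub
    simp at this

lemma discrete_rep {𝒜 : MeasurableSpace Ω} {f : Ω → ℝ≥0∞}
    (hf : Measurable[𝒜] f) (hf1 : ∀ ω, f ω ≤ 1) (K : ℕ) (hK : 0 < K) :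
    (∀ i : ℕ, MeasurableSet[𝒜] {ω' | ((i : ℝ) + 1) / K ≤ (f ω').toReal}) ∧
      (∀ ω, (K : ℝ≥0∞)⁻¹ * ∑ i ∈ Finset.range K,
        ({ω' | ((i : ℝ) + 1) / K ≤ (f ω').toReal}.indicator 1 ω) ≤ f ω) ∧
      (∀ ω, f ω ≤ (K : ℝ≥0∞)⁻¹ * (∑ i ∈ Finset.range K,
        ({ω' | ((i : ℝ) + 1) / K ≤ (f ω').toReal}.indicator 1 ω)) + (K : ℝ≥0∞)⁻¹) := by
  classical
  have hKpos : (0 : ℝ) < K := by exact_mod_cast hK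
  have hmeas : ∀ i : ℕ, MeasurableSet[𝒜] {ω' | ((i : ℝ) + 1) / K ≤ (f ω').toReal} :=
    fun i => measurableSet_le measurable_const hf.ennreal_toReal
  have hconv : ∀ n : ℕ, (K : ℝ≥0∞)⁻¹ * (n : ℝ≥0∞) = ENNReal.ofReal ((n : ℝ) / K) := by
    intro n
    rw [ENNReal.ofReal_div_of_pos hKpos, ENNReal.ofReal_natCast, ENNReal.ofReal_natCast,
      div_eq_mul_inv, mul_comm]
  have hinvc : ENNReal.ofReal (1 / (K : ℝ)) = (K : ℝ≥0∞)⁻¹ := by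
    rw [one_div, ENNReal.ofReal_inv_of_pos hKpos, ENNReal.ofReal_natCast]
  have hsum : ∀ ω, ∑ i ∈ Finset.range K,
      ({ω' | ((i : ℝ) + 1) / K ≤ (f ω').toReal}.indicator 1 ω)
      = ((((Finset.range K).filter fun i : ℕ =>
          ((i : ℝ) + 1) / K ≤ (f ω).toReal).card : ℕ) : ℝ≥0∞) := by
    intro ω
    simp only [Set.indicator_apply, Set.mem_setOf_eq, Pi.one_apply]
    rw [Finset.sum_boole]
  have hfne : ∀ ω, f ω ≠ ∞ := fun ω => ((hf1 ω).trans_lt one_lt_top).ne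
  have ha0 : ∀ ω, 0 ≤ (f ω).toReal := fun ω => ENNReal.toReal_nonneg
  have ha1 : ∀ ω, (f ω).toReal ≤ 1 := fun ω => by
    simpa using ENNReal.toReal_mono one_ne_top (hf1 ω)
  refine ⟨hmeas, fun ω => ?_, fun ω => ?_⟩
  · rw [hsum ω, hconv]
    conv_rhs => rw [← ENNReal.ofReal_toReal (hfne ω)]
    exact ENNReal.ofReal_le_ofReal (count_div_bounds K hK (ha0 ω) (ha1 ω)).1
  · rw [hsum ω, hconv, ← hinvc]
    conv_lhs => rw [← ENNReal.ofReal_toReal (hfne ω)]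
    rw [← ENNReal.ofReal_add (by positivity) (by positivity)]
    refine ENNReal.ofReal_le_ofReal ?_
    have h := (count_div_bounds K hK (ha0 ω) (ha1 ω)).2
    set n := (((Finset.range K).filter fun i : ℕ =>
      ((i : ℝ) + 1) / K ≤ (f ω).toReal).card : ℕ)
    calc (f ω).toReal ≤ ((n : ℝ) + 1) / K := h
      _ = (n : ℝ) / K + 1 / K := by ring

lemma lintegral_mul_bounds {𝒜 𝒝 : MeasurableSpace Ω} (h𝒜 : 𝒜 ≤ mΩ) (h𝒝 : 𝒝 ≤ mΩ)
    {f g : Ω → ℝ≥0∞} (hf : Measurable[𝒜] f) (hg : Measurable[𝒝] g)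
    (hf1 : ∀ ω, f ω ≤ 1) (hg1 : ∀ ω, g ω ≤ 1) :
    ∫⁻ ω, f ω * g ω ∂P ≤ (∫⁻ ω, f ω ∂P) * (∫⁻ ω, g ω ∂P) + alphaDep P 𝒜 𝒝 ∧
      (∫⁻ ω, f ω ∂P) * (∫⁻ ω, g ω ∂P) ≤ (∫⁻ ω, f ω * g ω ∂P) + alphaDep P 𝒜 𝒝 := by
  classical
  set α := alphaDep P 𝒜 𝒝 with hα
  have key : ∀ K : ℕ, 0 < K →
      (∫⁻ ω, f ω * g ω ∂P ≤ (∫⁻ ω, f ω ∂P) * (∫⁻ ω, g ω ∂P) + α + 3 * (K : ℝ≥0∞)⁻¹ ∧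
        (∫⁻ ω, f ω ∂P) * (∫⁻ ω, g ω ∂P) ≤ (∫⁻ ω, f ω * g ω ∂P) + α + 3 * (K : ℝ≥0∞)⁻¹) := by
    intro K hK
    obtain ⟨hAmeas, hfK_le, hle_fK⟩ := discrete_rep hf hf1 K hK
    obtain ⟨hBmeas, hgK_le, hle_gK⟩ := discrete_rep hg hg1 K hK
    set c : ℝ≥0∞ := (K : ℝ≥0∞)⁻¹ with hc
    set A : ℕ → Set Ω := fun i => {ω' | ((i : ℝ) + 1) / K ≤ (f ω').toReal} with hA
    set B : ℕ → Set Ω := fun j => {ω' | ((j : ℝ) + 1) / K ≤ (g ω').toReal} with hB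
    set fK : Ω → ℝ≥0∞ := fun ω => c * ∑ i ∈ Finset.range K, (A i).indicator 1 ω with hfK
    set gK : Ω → ℝ≥0∞ := fun ω => c * ∑ j ∈ Finset.range K, (B j).indicator 1 ω with hgK
    have hKne0 : (K : ℝ≥0∞) ≠ 0 := by exact_mod_cast hK.ne'
    have hcK : c * (K : ℝ≥0∞) = 1 := ENNReal.inv_mul_cancel hKne0 (ENNReal.natCast_ne_top K)
    have hc1 : c ≤ 1 := by
      rw [hc]
      exact ENNReal.inv_le_one.mpr (by exact_mod_cast hK)
    have hAm : ∀ i, MeasurableSet[mΩ] (A i) := fun i => h𝒜 _ (hAmeas i)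
    have hBm : ∀ j, MeasurableSet[mΩ] (B j) := fun j => h𝒝 _ (hBmeas j)
    have hind : ∀ s : Set Ω, MeasurableSet[mΩ] s → Measurable[mΩ] (s.indicator (1 : Ω → ℝ≥0∞)) := by
      intro s hs
      exact Measurable.indicator (measurable_const : Measurable[mΩ] fun _ : Ω => (1 : ℝ≥0∞)) hs
    have hfK1 : ∀ ω, fK ω ≤ 1 := fun ω => (hfK_le ω).trans (hf1 ω)
    have hgK1 : ∀ ω, gK ω ≤ 1 := fun ω => (hgK_le ω).trans (hg1 ω)
    have hfKm : Measurable[mΩ] fK :=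
      (Finset.measurable_sum _ fun i _ => hind _ (hAm i)).const_mul c
    have hgKm : Measurable[mΩ] gK :=
      (Finset.measurable_sum _ fun j _ => hind _ (hBm j)).const_mul c
    -- integral identities
    have hIfK : ∫⁻ ω, fK ω ∂P = c * ∑ i ∈ Finset.range K, P (A i) := by
      calc ∫⁻ ω, fK ω ∂P
          = c * ∫⁻ ω, ∑ i ∈ Finset.range K, (A i).indicator 1 ω ∂P :=
            lintegral_const_mul c (Finset.measurable_sum _ fun i _ =>
              hind _ (hAm i))
        _ = c * ∑ i ∈ Finset.range K, ∫⁻ ω, (A i).indicator 1 ω ∂P := by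
            rw [lintegral_finset_sum _ fun i _ => hind _ (hAm i)]
        _ = c * ∑ i ∈ Finset.range K, P (A i) := by
            congr 1
            exact Finset.sum_congr rfl fun i _ => lintegral_indicator_one (hAm i)
    have hIgK : ∫⁻ ω, gK ω ∂P = c * ∑ j ∈ Finset.range K, P (B j) := by
      calc ∫⁻ ω, gK ω ∂P
          = c * ∫⁻ ω, ∑ j ∈ Finset.range K, (B j).indicator 1 ω ∂P :=
            lintegral_const_mul c (Finset.measurable_sum _ fun j _ =>
              hind _ (hBm j))
        _ = c * ∑ j ∈ Finset.range K, ∫⁻ ω, (B j).indicator 1 ω ∂P := by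
            rw [lintegral_finset_sum _ fun j _ => hind _ (hBm j)]
        _ = c * ∑ j ∈ Finset.range K, P (B j) := by
            congr 1
            exact Finset.sum_congr rfl fun j _ => lintegral_indicator_one (hBm j)
    have hprod : ∀ ω, fK ω * gK ω
        = (c * c) * ∑ i ∈ Finset.range K, ∑ j ∈ Finset.range K,
            (A i ∩ B j).indicator 1 ω := by
      intro ω
      calc fK ω * gK ω
          = (c * c) * ((∑ i ∈ Finset.range K, (A i).indicator 1 ω) *
              (∑ j ∈ Finset.range K, (B j).indicator 1 ω)) := by
            rw [hfK, hgK]; ring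
        _ = (c * c) * ∑ i ∈ Finset.range K, ∑ j ∈ Finset.range K,
              (A i).indicator 1 ω * (B j).indicator 1 ω := by
            rw [Finset.sum_mul_sum]
        _ = (c * c) * ∑ i ∈ Finset.range K, ∑ j ∈ Finset.range K,
              (A i ∩ B j).indicator 1 ω := by
            congr 1
            refine Finset.sum_congr rfl fun i _ => Finset.sum_congr rfl fun j _ => ?_
            rw [Set.inter_indicator_one]
            rfl
    have hIfKgK : ∫⁻ ω, fK ω * gK ω ∂P
        = (c * c) * ∑ i ∈ Finset.range K, ∑ j ∈ Finset.range K, P (A i ∩ B j) := by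
      rw [lintegral_congr hprod]
      calc ∫⁻ ω, (c * c) * ∑ i ∈ Finset.range K, ∑ j ∈ Finset.range K,
              (A i ∩ B j).indicator 1 ω ∂P
          = (c * c) * ∫⁻ ω, ∑ i ∈ Finset.range K, ∑ j ∈ Finset.range K,
              (A i ∩ B j).indicator 1 ω ∂P :=
            lintegral_const_mul _ (Finset.measurable_sum _ fun i _ =>
              Finset.measurable_sum _ fun j _ =>
                hind _ ((hAm i).inter (hBm j)))
        _ = (c * c) * ∑ i ∈ Finset.range K, ∑ j ∈ Finset.range K, P (A i ∩ B j) := by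
            congr 1
            rw [lintegral_finset_sum _ fun i _ => Finset.measurable_sum _ fun j _ =>
              hind _ ((hAm i).inter (hBm j))]
            refine Finset.sum_congr rfl fun i _ => ?_
            rw [lintegral_finset_sum _ fun j _ =>
              hind _ ((hAm i).inter (hBm j))]
            exact Finset.sum_congr rfl fun j _ => lintegral_indicator_one ((hAm i).inter (hBm j))
    have hmulsum : (∫⁻ ω, fK ω ∂P) * (∫⁻ ω, gK ω ∂P)
        = (c * c) * ∑ i ∈ Finset.range K, ∑ j ∈ Finset.range K, P (A i) * P (B j) := by
      rw [hIfK, hIgK]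
      calc (c * ∑ i ∈ Finset.range K, P (A i)) * (c * ∑ j ∈ Finset.range K, P (B j))
          = (c * c) * ((∑ i ∈ Finset.range K, P (A i)) * (∑ j ∈ Finset.range K, P (B j))) := by
            ring
        _ = (c * c) * ∑ i ∈ Finset.range K, ∑ j ∈ Finset.range K, P (A i) * P (B j) := by
            rw [Finset.sum_mul_sum]
    have hshift : ∀ x : ℕ → ℕ → ℝ≥0∞,
        ∑ i ∈ Finset.range K, ∑ j ∈ Finset.range K, (x i j + α)
          = (∑ i ∈ Finset.range K, ∑ j ∈ Finset.range K, x i j) + (K : ℝ≥0∞) * K * α := by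
      intro x
      simp [Finset.sum_add_distrib, Finset.sum_const, Finset.card_range, nsmul_eq_mul]
      ring
    have hdist : ∀ X : ℝ≥0∞, (c * c) * (X + (K : ℝ≥0∞) * K * α) = (c * c) * X + α := by
      intro X
      rw [mul_add]
      congr 1
      calc (c * c) * ((K : ℝ≥0∞) * K * α) = (c * K) * ((c * K) * α) := by ring
        _ = α := by rw [hcK]; simp
    have hd1 : ∫⁻ ω, fK ω * gK ω ∂P ≤ (∫⁻ ω, fK ω ∂P) * (∫⁻ ω, gK ω ∂P) + α := by
      rw [hIfKgK, hmulsum]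
      calc (c * c) * ∑ i ∈ Finset.range K, ∑ j ∈ Finset.range K, P (A i ∩ B j)
          ≤ (c * c) * ∑ i ∈ Finset.range K, ∑ j ∈ Finset.range K, (P (A i) * P (B j) + α) := by
            refine mul_le_mul_right ?_ _
            refine Finset.sum_le_sum fun i _ => Finset.sum_le_sum fun j _ =>
              (meas_bounds P (hAmeas i) (hBmeas j)).1
        _ = (c * c) * ∑ i ∈ Finset.range K, ∑ j ∈ Finset.range K, P (A i) * P (B j) + α := by
            rw [hshift, hdist]
    have hd2 : (∫⁻ ω, fK ω ∂P) * (∫⁻ ω, gK ω ∂P) ≤ ∫⁻ ω, fK ω * gK ω ∂P + α := by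
      rw [hIfKgK, hmulsum]
      calc (c * c) * ∑ i ∈ Finset.range K, ∑ j ∈ Finset.range K, P (A i) * P (B j)
          ≤ (c * c) * ∑ i ∈ Finset.range K, ∑ j ∈ Finset.range K, (P (A i ∩ B j) + α) := by
            refine mul_le_mul_right ?_ _
            refine Finset.sum_le_sum fun i _ => Finset.sum_le_sum fun j _ =>
              (meas_bounds P (hAmeas i) (hBmeas j)).2
        _ = (c * c) * ∑ i ∈ Finset.range K, ∑ j ∈ Finset.range K, P (A i ∩ B j) + α := by
            rw [hshift, hdist]
    have hIm : ∫⁻ ω, fK ω ∂P ≤ ∫⁻ ω, f ω ∂P := lintegral_mono hfK_le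
    have hIm' : ∫⁻ ω, gK ω ∂P ≤ ∫⁻ ω, g ω ∂P := lintegral_mono hgK_le
    have hIfK1 : ∫⁻ ω, fK ω ∂P ≤ 1 := by
      calc ∫⁻ ω, fK ω ∂P ≤ ∫⁻ _, 1 ∂P := lintegral_mono hfK1
        _ = 1 := by simp
    have hIgK1 : ∫⁻ ω, gK ω ∂P ≤ 1 := by
      calc ∫⁻ ω, gK ω ∂P ≤ ∫⁻ _, 1 ∂P := lintegral_mono hgK1
        _ = 1 := by simp
    constructor
    · have hpt : ∀ ω, f ω * g ω ≤ fK ω * gK ω + 3 * c := by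
        intro ω
        calc f ω * g ω ≤ (fK ω + c) * (gK ω + c) := mul_le_mul' (hle_fK ω) (hle_gK ω)
          _ = fK ω * gK ω + (fK ω * c + c * gK ω + c * c) := by ring
          _ ≤ fK ω * gK ω + (1 * c + c * 1 + c * 1) :=
              add_le_add le_rfl (add_le_add (add_le_add (mul_le_mul_left (hfK1 ω) c)
                (mul_le_mul_right (hgK1 ω) c)) (mul_le_mul_right hc1 c))
          _ = fK ω * gK ω + 3 * c := by ring
      calc ∫⁻ ω, f ω * g ω ∂P ≤ ∫⁻ ω, (fK ω * gK ω + 3 * c) ∂P := lintegral_mono hpt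
        _ = ∫⁻ ω, fK ω * gK ω ∂P + 3 * c := by
            rw [lintegral_add_right _ measurable_const, lintegral_const, measure_univ, mul_one]
        _ ≤ ((∫⁻ ω, fK ω ∂P) * (∫⁻ ω, gK ω ∂P) + α) + 3 * c := by gcongr
        _ ≤ ((∫⁻ ω, f ω ∂P) * (∫⁻ ω, g ω ∂P) + α) + 3 * c :=
            add_le_add (add_le_add (mul_le_mul' hIm hIm') le_rfl) le_rfl
    · have h1 : ∫⁻ ω, f ω ∂P ≤ ∫⁻ ω, fK ω ∂P + c := by
        calc ∫⁻ ω, f ω ∂P ≤ ∫⁻ ω, (fK ω + c) ∂P := lintegral_mono hle_fK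
          _ = ∫⁻ ω, fK ω ∂P + c := by
              rw [lintegral_add_right _ measurable_const, lintegral_const, measure_univ, mul_one]
      have h2 : ∫⁻ ω, g ω ∂P ≤ ∫⁻ ω, gK ω ∂P + c := by
        calc ∫⁻ ω, g ω ∂P ≤ ∫⁻ ω, (gK ω + c) ∂P := lintegral_mono hle_gK
          _ = ∫⁻ ω, gK ω ∂P + c := by
              rw [lintegral_add_right _ measurable_const, lintegral_const, measure_univ, mul_one]
      have h3 : ∫⁻ ω, fK ω * gK ω ∂P ≤ ∫⁻ ω, f ω * g ω ∂P :=
        lintegral_mono fun ω => mul_le_mul' (hfK_le ω) (hgK_le ω)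
      calc (∫⁻ ω, f ω ∂P) * (∫⁻ ω, g ω ∂P)
          ≤ (∫⁻ ω, fK ω ∂P + c) * (∫⁻ ω, gK ω ∂P + c) := mul_le_mul' h1 h2
        _ = (∫⁻ ω, fK ω ∂P) * (∫⁻ ω, gK ω ∂P)
            + ((∫⁻ ω, fK ω ∂P) * c + c * (∫⁻ ω, gK ω ∂P) + c * c) := by ring
        _ ≤ (∫⁻ ω, fK ω ∂P) * (∫⁻ ω, gK ω ∂P) + (1 * c + c * 1 + c * 1) :=
            add_le_add le_rfl (add_le_add (add_le_add (mul_le_mul_left hIfK1 c)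
              (mul_le_mul_right hIgK1 c)) (mul_le_mul_right hc1 c))
        _ = (∫⁻ ω, fK ω ∂P) * (∫⁻ ω, gK ω ∂P) + 3 * c := by ring
        _ ≤ (∫⁻ ω, fK ω * gK ω ∂P + α) + 3 * c := by gcongr
        _ ≤ (∫⁻ ω, f ω * g ω ∂P + α) + 3 * c := by gcongr
  have h3 : Filter.Tendsto (fun K : ℕ => 3 * (K : ℝ≥0∞)⁻¹) atTop (nhds 0) := by
    have h := ENNReal.tendsto_inv_nat_nhds_zero
    have := ENNReal.Tendsto.const_mul (a := (3 : ℝ≥0∞)) h (Or.inr (by norm_num))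
    simpa using this
  constructor
  · have hlim : Filter.Tendsto
        (fun K : ℕ => (∫⁻ ω, f ω ∂P) * (∫⁻ ω, g ω ∂P) + α + 3 * (K : ℝ≥0∞)⁻¹)
        atTop (nhds ((∫⁻ ω, f ω ∂P) * (∫⁻ ω, g ω ∂P) + α)) := by
      have := Filter.Tendsto.const_add ((∫⁻ ω, f ω ∂P) * (∫⁻ ω, g ω ∂P) + α) h3
      simpa using this
    refine ge_of_tendsto hlim ?_
    exact Filter.eventually_atTop.mpr ⟨1, fun K hK => (key K hK).1⟩
  · have hlim : Filter.Tendsto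
        (fun K : ℕ => (∫⁻ ω, f ω * g ω ∂P) + α + 3 * (K : ℝ≥0∞)⁻¹)
        atTop (nhds ((∫⁻ ω, f ω * g ω ∂P) + α)) := by
      have := Filter.Tendsto.const_add ((∫⁻ ω, f ω * g ω ∂P) + α) h3
      simpa using this
    refine ge_of_tendsto hlim ?_
    exact Filter.eventually_atTop.mpr ⟨1, fun K hK => (key K hK).2⟩

lemma indep_mono {m₁ m₂ m₁' m₂' : MeasurableSpace Ω} (h1 : m₁ ≤ m₁') (h2 : m₂ ≤ m₂')
    (h : ProbabilityTheory.Indep m₁' m₂' P) : ProbabilityTheory.Indep m₁ m₂ P := by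
  rw [ProbabilityTheory.Indep_iff] at h ⊢
  exact fun t1 t2 ht1 ht2 => h t1 t2 (h1 _ ht1) (h2 _ ht2)

lemma comap_diag_prod (m₁ m₂ : MeasurableSpace Ω) :
    MeasurableSpace.comap (fun ω : Ω => (ω, ω)) (m₁.prod m₂) = m₁ ⊔ m₂ := by
  have h1 : (Prod.fst ∘ fun ω : Ω => (ω, ω)) = id := rfl
  have h2 : (Prod.snd ∘ fun ω : Ω => (ω, ω)) = id := rfl
  rw [MeasurableSpace.prod, MeasurableSpace.comap_sup, MeasurableSpace.comap_comp,
    MeasurableSpace.comap_comp, h1, h2, MeasurableSpace.comap_id, MeasurableSpace.comap_id]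

lemma alphaDep_sup_le {𝒜₁ 𝒝₁ 𝒜₂ 𝒝₂ : MeasurableSpace Ω}
    (h𝒜₁ : 𝒜₁ ≤ mΩ) (h𝒝₁ : 𝒝₁ ≤ mΩ) (h𝒜₂ : 𝒜₂ ≤ mΩ) (h𝒝₂ : 𝒝₂ ≤ mΩ)
    (hindep : ProbabilityTheory.Indep (𝒜₁ ⊔ 𝒝₁) (𝒜₂ ⊔ 𝒝₂) P) :
    alphaDep P (𝒜₁ ⊔ 𝒜₂) (𝒝₁ ⊔ 𝒝₂) ≤ alphaDep P 𝒜₁ 𝒝₁ + alphaDep P 𝒜₂ 𝒝₂ := by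
  set α₁ := alphaDep P 𝒜₁ 𝒝₁ with hα₁
  set α₂ := alphaDep P 𝒜₂ 𝒝₂ with hα₂
  set C₁ := 𝒜₁ ⊔ 𝒝₁ with hC₁def
  set C₂ := 𝒜₂ ⊔ 𝒝₂ with hC₂def
  have hC₁ : C₁ ≤ mΩ := sup_le h𝒜₁ h𝒝₁
  have hC₂ : C₂ ≤ mΩ := sup_le h𝒜₂ h𝒝₂
  haveI hP1 : IsProbabilityMeasure (P.trim hC₁) :=
    ⟨by rw [trim_measurableSet_eq hC₁ (@MeasurableSet.univ Ω C₁)]; exact measure_univ⟩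
  haveI hP2 : IsProbabilityMeasure (P.trim hC₂) :=
    ⟨by rw [trim_measurableSet_eq hC₂ (@MeasurableSet.univ Ω C₂)]; exact measure_univ⟩
  haveI iSigma1 : @SigmaFinite Ω C₁ (P.trim hC₁) := inferInstance
  haveI iSigma2 : @SigmaFinite Ω C₂ (P.trim hC₂) := inferInstance
  haveI iSF2 : @SFinite Ω C₂ (P.trim hC₂) := inferInstance
  set Q : @Measure (Ω × Ω) (C₁.prod C₂) := @Measure.prod Ω Ω C₁ C₂ (P.trim hC₁) (P.trim hC₂)
    with hQdef
  have hdiag : @Measurable Ω (Ω × Ω) mΩ (C₁.prod C₂) (fun ω => (ω, ω)) :=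
    Measurable.prodMk (measurable_id'' hC₁) (measurable_id'' hC₂)
  have hmap : Q = @Measure.map Ω (Ω × Ω) mΩ (C₁.prod C₂) (fun ω => (ω, ω)) P := by
    refine @Measure.prod_eq Ω Ω C₁ C₂ (P.trim hC₁) iSigma1 (P.trim hC₂) iSigma2 _ ?_
    intro s t hs ht
    rw [Measure.map_apply hdiag (MeasurableSet.prod hs ht)]
    have hpre : (fun ω : Ω => (ω, ω)) ⁻¹' (s ×ˢ t) = s ∩ t := by
      ext ω; simp
    rw [hpre, (ProbabilityTheory.Indep_iff _ _ _).mp hindep s t hs ht,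
      trim_measurableSet_eq hC₁ hs, trim_measurableSet_eq hC₂ ht]
  have hsecmeas : ∀ {m₁ m₂ : MeasurableSpace Ω} {S : Set (Ω × Ω)},
      MeasurableSet[m₁.prod m₂] S → ∀ ω, MeasurableSet[m₂] (Prod.mk ω ⁻¹' S) := by
    intro m₁ m₂ S hS ω
    have h : @Measurable Ω (Ω × Ω) m₂ (m₁.prod m₂) (Prod.mk ω) :=
      @measurable_prodMk_left Ω Ω m₁ m₂ ω
    exact h hS
  have hmeasF : ∀ {m₁ m₂ : MeasurableSpace Ω} (hm₂ : m₂ ≤ mΩ) {S : Set (Ω × Ω)},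
      MeasurableSet[m₁.prod m₂] S → Measurable[m₁] (fun ω => P (Prod.mk ω ⁻¹' S)) := by
    intro m₁ m₂ hm₂ S hS
    haveI : IsProbabilityMeasure (P.trim hm₂) :=
      ⟨by rw [trim_measurableSet_eq hm₂ (@MeasurableSet.univ Ω m₂)]; exact measure_univ⟩
    haveI iSF : @SFinite Ω m₂ (P.trim hm₂) := inferInstance
    have h : @Measurable Ω ℝ≥0∞ m₁ _ (fun ω => (P.trim hm₂) (Prod.mk ω ⁻¹' S)) :=
      @measurable_measure_prodMk_left Ω Ω m₁ m₂ (P.trim hm₂) iSF S hS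
    have heq : (fun ω => P (Prod.mk ω ⁻¹' S)) = fun ω => (P.trim hm₂) (Prod.mk ω ⁻¹' S) :=
      funext fun ω => (trim_measurableSet_eq hm₂ (hsecmeas hS ω)).symm
    rw [heq]; exact h
  have hmain : ∀ {S : Set (Ω × Ω)}, MeasurableSet[C₁.prod C₂] S →
      P ((fun ω : Ω => (ω, ω)) ⁻¹' S) = ∫⁻ ω, P (Prod.mk ω ⁻¹' S) ∂P := by
    intro S hS
    have h1 : P ((fun ω : Ω => (ω, ω)) ⁻¹' S) = Q S := by
      rw [hmap]; exact (Measure.map_apply hdiag hS).symm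
    have h2 : Q S = ∫⁻ ω, (P.trim hC₂) (Prod.mk ω ⁻¹' S) ∂(P.trim hC₁) :=
      @Measure.prod_apply Ω Ω C₁ C₂ (P.trim hC₁) (P.trim hC₂) iSF2 S hS
    have h3 : (fun ω => (P.trim hC₂) (Prod.mk ω ⁻¹' S)) = fun ω => P (Prod.mk ω ⁻¹' S) :=
      funext fun ω => trim_measurableSet_eq hC₂ (hsecmeas hS ω)
    rw [h1, h2]
    calc ∫⁻ ω, (P.trim hC₂) (Prod.mk ω ⁻¹' S) ∂(P.trim hC₁)
        = ∫⁻ ω, P (Prod.mk ω ⁻¹' S) ∂(P.trim hC₁) := by rw [h3]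
      _ = ∫⁻ ω, P (Prod.mk ω ⁻¹' S) ∂P := lintegral_trim hC₁ (hmeasF hC₂ hS)
  have hprodmono : ∀ {m₁ m₂ : MeasurableSpace Ω}, m₁ ≤ C₁ → m₂ ≤ C₂ →
      m₁.prod m₂ ≤ C₁.prod C₂ := by
    intro m₁ m₂ h1 h2
    exact sup_le_sup (MeasurableSpace.comap_mono h1) (MeasurableSpace.comap_mono h2)
  simp only [alphaDep]
  refine iSup₂_le fun A hA => iSup₂_le fun B hB => ?_
  obtain ⟨At, hAt, hAteq⟩ : ∃ At, MeasurableSet[𝒜₁.prod 𝒜₂] At ∧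
      (fun ω : Ω => (ω, ω)) ⁻¹' At = A := by
    have h := hA
    rw [← comap_diag_prod 𝒜₁ 𝒜₂] at h
    exact MeasurableSpace.measurableSet_comap.mp h
  obtain ⟨Bt, hBt, hBteq⟩ : ∃ Bt, MeasurableSet[𝒝₁.prod 𝒝₂] Bt ∧
      (fun ω : Ω => (ω, ω)) ⁻¹' Bt = B := by
    have h := hB
    rw [← comap_diag_prod 𝒝₁ 𝒝₂] at h
    exact MeasurableSpace.measurableSet_comap.mp h
  have hAt' : MeasurableSet[C₁.prod C₂] At := hprodmono le_sup_left le_sup_left _ hAt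
  have hBt' : MeasurableSet[C₁.prod C₂] Bt := hprodmono le_sup_right le_sup_right _ hBt
  set F := fun ω => P (Prod.mk ω ⁻¹' At) with hF
  set G := fun ω => P (Prod.mk ω ⁻¹' Bt) with hG
  have hFmeas : Measurable[𝒜₁] F := hmeasF h𝒜₂ hAt
  have hGmeas : Measurable[𝒝₁] G := hmeasF h𝒝₂ hBt
  have hF1 : ∀ ω, F ω ≤ 1 := fun ω => prob_le_one
  have hG1 : ∀ ω, G ω ≤ 1 := fun ω => prob_le_one
  have hPA : P A = ∫⁻ ω, F ω ∂P := by rw [← hAteq]; exact hmain hAt'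
  have hPB : P B = ∫⁻ ω, G ω ∂P := by rw [← hBteq]; exact hmain hBt'
  have hPAB : P (A ∩ B) = ∫⁻ ω, P ((Prod.mk ω ⁻¹' At) ∩ (Prod.mk ω ⁻¹' Bt)) ∂P := by
    have hABeq : A ∩ B = (fun ω : Ω => (ω, ω)) ⁻¹' (At ∩ Bt) := by
      rw [Set.preimage_inter, hAteq, hBteq]
    rw [hABeq, hmain (hAt'.inter hBt')]
    simp only [Set.preimage_inter]
  have hpt : ∀ ω, P ((Prod.mk ω ⁻¹' At) ∩ (Prod.mk ω ⁻¹' Bt)) ≤ F ω * G ω + α₂ ∧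
      F ω * G ω ≤ P ((Prod.mk ω ⁻¹' At) ∩ (Prod.mk ω ⁻¹' Bt)) + α₂ :=
    fun ω => meas_bounds P (hsecmeas hAt ω) (hsecmeas hBt ω)
  have hup : P (A ∩ B) ≤ ∫⁻ ω, F ω * G ω ∂P + α₂ := by
    rw [hPAB]
    calc ∫⁻ ω, P ((Prod.mk ω ⁻¹' At) ∩ (Prod.mk ω ⁻¹' Bt)) ∂P
        ≤ ∫⁻ ω, (F ω * G ω + α₂) ∂P := lintegral_mono fun ω => (hpt ω).1
      _ = ∫⁻ ω, F ω * G ω ∂P + α₂ := by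
          rw [lintegral_add_right _ measurable_const, lintegral_const, measure_univ, mul_one]
  have hdown : ∫⁻ ω, F ω * G ω ∂P ≤ P (A ∩ B) + α₂ := by
    rw [hPAB]
    calc ∫⁻ ω, F ω * G ω ∂P
        ≤ ∫⁻ ω, (P ((Prod.mk ω ⁻¹' At) ∩ (Prod.mk ω ⁻¹' Bt)) + α₂) ∂P :=
          lintegral_mono fun ω => (hpt ω).2
      _ = ∫⁻ ω, P ((Prod.mk ω ⁻¹' At) ∩ (Prod.mk ω ⁻¹' Bt)) ∂P + α₂ := by
          rw [lintegral_add_right _ measurable_const, lintegral_const, measure_univ, mul_one]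
  obtain ⟨hcov1, hcov2⟩ := lintegral_mul_bounds P h𝒜₁ h𝒝₁ hFmeas hGmeas hF1 hG1
  have h1 : P (A ∩ B) ≤ P A * P B + (α₁ + α₂) := by
    calc P (A ∩ B) ≤ ∫⁻ ω, F ω * G ω ∂P + α₂ := hup
      _ ≤ ((∫⁻ ω, F ω ∂P) * (∫⁻ ω, G ω ∂P) + α₁) + α₂ := add_le_add hcov1 le_rfl
      _ = P A * P B + (α₁ + α₂) := by rw [hPA, hPB]; ring
  have h2 : P A * P B ≤ P (A ∩ B) + (α₁ + α₂) := by
    calc P A * P B = (∫⁻ ω, F ω ∂P) * (∫⁻ ω, G ω ∂P) := by rw [hPA, hPB]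
      _ ≤ ∫⁻ ω, F ω * G ω ∂P + α₁ := hcov2
      _ ≤ (P (A ∩ B) + α₂) + α₁ := add_le_add hdown le_rfl
      _ = P (A ∩ B) + (α₁ + α₂) := by ring
  have habs := ennreal_abs_of_pair (measure_ne_top P _)
    (ENNReal.mul_ne_top (measure_ne_top P _) (measure_ne_top P _)) h1 h2
  rwa [ENNReal.toReal_mul] at habs

lemma alphaDep_bot (𝒝 : MeasurableSpace Ω) : alphaDep P ⊥ 𝒝 ≤ 0 := by
  simp only [alphaDep]
  refine iSup₂_le fun A hA => iSup₂_le fun B hB => ?_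
  rcases MeasurableSpace.measurableSet_bot_iff.mp hA with rfl | rfl
  · simp
  · simp [Set.univ_inter, measure_univ]

lemma alphaDep_finite (𝒜 𝒝 : ℕ → MeasurableSpace Ω) (h𝒜 : ∀ n, 𝒜 n ≤ mΩ) (h𝒝 : ∀ n, 𝒝 n ≤ mΩ)
    (hindep : ProbabilityTheory.iIndep (fun n => 𝒜 n ⊔ 𝒝 n) P) (N : ℕ) :
    alphaDep P ((Finset.range N).sup 𝒜) ((Finset.range N).sup 𝒝)
      ≤ ∑ n ∈ Finset.range N, alphaDep P (𝒜 n) (𝒝 n) := by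
  induction N with
  | zero => simpa using alphaDep_bot P ⊥
  | succ N ih =>
    have hC : ∀ n, 𝒜 n ⊔ 𝒝 n ≤ mΩ := fun n => sup_le (h𝒜 n) (h𝒝 n)
    have hdisj : Disjoint {i : ℕ | i < N} ({N} : Set ℕ) := by
      rw [Set.disjoint_left]
      intro i hi hT
      rw [Set.mem_singleton_iff] at hT
      rw [Set.mem_setOf_eq] at hi
      omega
    have hbig := ProbabilityTheory.indep_iSup_of_disjoint hC hindep hdisj
    have hsingle : (⨆ i ∈ ({N} : Set ℕ), (𝒜 i ⊔ 𝒝 i)) = 𝒜 N ⊔ 𝒝 N := by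
      simp
    rw [hsingle] at hbig
    have hle1 : (Finset.range N).sup 𝒜 ⊔ (Finset.range N).sup 𝒝
        ≤ ⨆ i ∈ {i : ℕ | i < N}, (𝒜 i ⊔ 𝒝 i) := by
      refine sup_le ?_ ?_
      · refine Finset.sup_le fun i hi => ?_
        calc 𝒜 i ≤ 𝒜 i ⊔ 𝒝 i := le_sup_left
          _ ≤ ⨆ i ∈ {i : ℕ | i < N}, (𝒜 i ⊔ 𝒝 i) :=
            le_biSup (fun i => 𝒜 i ⊔ 𝒝 i) (Finset.mem_range.mp hi)
      · refine Finset.sup_le fun i hi => ?_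
        calc 𝒝 i ≤ 𝒜 i ⊔ 𝒝 i := le_sup_right
          _ ≤ ⨆ i ∈ {i : ℕ | i < N}, (𝒜 i ⊔ 𝒝 i) :=
            le_biSup (fun i => 𝒜 i ⊔ 𝒝 i) (Finset.mem_range.mp hi)
    have hindep2 : ProbabilityTheory.Indep
        ((Finset.range N).sup 𝒜 ⊔ (Finset.range N).sup 𝒝) (𝒜 N ⊔ 𝒝 N) P :=
      indep_mono P hle1 le_rfl hbig
    have hsupA : (Finset.range (N + 1)).sup 𝒜 = (Finset.range N).sup 𝒜 ⊔ 𝒜 N := by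
      rw [Finset.range_add_one, Finset.sup_insert, sup_comm]
    have hsupB : (Finset.range (N + 1)).sup 𝒝 = (Finset.range N).sup 𝒝 ⊔ 𝒝 N := by
      rw [Finset.range_add_one, Finset.sup_insert, sup_comm]
    calc alphaDep P ((Finset.range (N + 1)).sup 𝒜) ((Finset.range (N + 1)).sup 𝒝)
        = alphaDep P ((Finset.range N).sup 𝒜 ⊔ 𝒜 N) ((Finset.range N).sup 𝒝 ⊔ 𝒝 N) := by
          rw [hsupA, hsupB]
      _ ≤ alphaDep P ((Finset.range N).sup 𝒜) ((Finset.range N).sup 𝒝)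
            + alphaDep P (𝒜 N) (𝒝 N) :=
          alphaDep_sup_le P (Finset.sup_le fun n _ => h𝒜 n) (Finset.sup_le fun n _ => h𝒝 n)
            (h𝒜 N) (h𝒝 N) hindep2
      _ ≤ (∑ n ∈ Finset.range N, alphaDep P (𝒜 n) (𝒝 n)) + alphaDep P (𝒜 N) (𝒝 N) :=
          add_le_add ih le_rfl
      _ = ∑ n ∈ Finset.range (N + 1), alphaDep P (𝒜 n) (𝒝 n) :=
          (Finset.sum_range_succ _ N).symm

lemma approx_lemma {m : ℕ → MeasurableSpace Ω} (hmono : Monotone m) (hle : ∀ n, m n ≤ mΩ)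
    {A : Set Ω} (hA : MeasurableSet[⨆ n, m n] A) {ε : ℝ} (hε : 0 < ε) :
    ∃ N A', MeasurableSet[m N] A' ∧ P (symmDiff A A') ≤ ENNReal.ofReal ε := by
  classical
  have hsuple : (⨆ n, m n) ≤ mΩ := iSup_le hle
  set D : MeasurableSpace Ω :=
    { MeasurableSet' := fun S => MeasurableSet[⨆ n, m n] S ∧ ∀ δ : ℝ, 0 < δ →
        ∃ N A', MeasurableSet[m N] A' ∧ P (symmDiff S A') ≤ ENNReal.ofReal δ
      measurableSet_empty := ⟨@MeasurableSet.empty Ω (⨆ n, m n), fun δ hδ =>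
        ⟨0, ∅, @MeasurableSet.empty Ω (m 0), by simp [symmDiff_self, Set.bot_eq_empty]⟩⟩
      measurableSet_compl := by
        rintro S ⟨hS1, hS2⟩
        refine ⟨hS1.compl, fun δ hδ => ?_⟩
        obtain ⟨N, A', hA', hP⟩ := hS2 δ hδ
        exact ⟨N, A'ᶜ, hA'.compl, by rwa [compl_symmDiff_compl]⟩
      measurableSet_iUnion := by
        rintro s hs
        refine ⟨MeasurableSet.iUnion fun k => (hs k).1, fun δ hδ => ?_⟩
        have hsm : ∀ k, MeasurableSet (s k) := fun k => hsuple _ (hs k).1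
        have hfin : P (⋃ k, s k) ≠ ∞ := measure_ne_top P _
        have hhalf : (0 : ℝ) < δ / 2 := by positivity
        obtain ⟨K, hK⟩ : ∃ K, P (⋃ k, s k) ≤ P (Set.accumulate s K) + ENNReal.ofReal (δ / 2) := by
          rcases eq_or_ne (P (⋃ k, s k)) 0 with h0 | h0
          · exact ⟨0, by rw [h0]; exact zero_le⟩
          · have hsub : P (⋃ k, s k) - ENNReal.ofReal (δ / 2)
                < ⨆ K, P (Set.accumulate s K) := by
              rw [← measure_iUnion_eq_iSup_accumulate]
              exact ENNReal.sub_lt_self hfin h0 (by simp [hhalf])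
            obtain ⟨K, hK⟩ := lt_iSup_iff.mp hsub
            exact ⟨K, tsub_le_iff_right.mp (le_of_lt hK)⟩
        have hmeasacc : MeasurableSet (Set.accumulate s K) := by
          rw [Set.accumulate_def]
          exact MeasurableSet.biUnion (Set.to_countable _) fun i _ => hsm i
        have haccsub : Set.accumulate s K ⊆ ⋃ k, s k := by
          rw [Set.accumulate_def]
          exact Set.iUnion₂_subset fun i _ => Set.subset_iUnion s i
        have htail : P ((⋃ k, s k) \ Set.accumulate s K) ≤ ENNReal.ofReal (δ / 2) := by
          rw [measure_diff haccsub hmeasacc.nullMeasurableSet (measure_ne_top P _)]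
          rw [tsub_le_iff_right]
          rwa [add_comm] at hK
        have hch : ∀ k, ∃ N A', MeasurableSet[m N] A' ∧
            P (symmDiff (s k) A') ≤ ENNReal.ofReal (δ / (2 * (K + 1))) :=
          fun k => (hs k).2 _ (by positivity)
        choose Nf Af hAf hPf using hch
        set N := (Finset.range (K + 1)).sup Nf with hN
        refine ⟨N, ⋃ k ∈ Finset.range (K + 1), Af k, ?_, ?_⟩
        · refine MeasurableSet.biUnion (Finset.range (K + 1)).countable_toSet fun k hk => ?_
          exact hmono (Finset.le_sup hk) _ (hAf k)
        · have hsubset : symmDiff (⋃ k, s k) (⋃ k ∈ Finset.range (K + 1), Af k) ⊆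
              ((⋃ k, s k) \ Set.accumulate s K)
                ∪ ⋃ k ∈ Finset.range (K + 1), symmDiff (s k) (Af k) := by
            intro ω hω
            rw [Set.mem_symmDiff] at hω
            rcases hω with ⟨hω1, hω2⟩ | ⟨hω1, hω2⟩
            · by_cases hacc : ω ∈ Set.accumulate s K
              · obtain ⟨k, hkK, hk⟩ : ∃ k, k ≤ K ∧ ω ∈ s k := by
                  rw [Set.accumulate_def] at hacc
                  simpa using hacc
                have hωAf : ω ∉ Af k := by
                  intro hc
                  exact hω2 (Set.mem_biUnion (Finset.mem_range.mpr (Nat.lt_succ_of_le hkK)) hc)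
                refine Or.inr (Set.mem_biUnion (Finset.mem_range.mpr (Nat.lt_succ_of_le hkK)) ?_)
                rw [Set.mem_symmDiff]
                exact Or.inl ⟨hk, hωAf⟩
              · exact Or.inl ⟨hω1, hacc⟩
            · obtain ⟨k, hk, hωk⟩ : ∃ k, k ∈ Finset.range (K + 1) ∧ ω ∈ Af k := by
                simpa using hω1
              refine Or.inr (Set.mem_biUnion hk ?_)
              rw [Set.mem_symmDiff]
              exact Or.inr ⟨hωk, fun hc => hω2 (Set.mem_iUnion.mpr ⟨k, hc⟩)⟩
          calc P (symmDiff (⋃ k, s k) (⋃ k ∈ Finset.range (K + 1), Af k))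
              ≤ P (((⋃ k, s k) \ Set.accumulate s K)
                  ∪ ⋃ k ∈ Finset.range (K + 1), symmDiff (s k) (Af k)) := measure_mono hsubset
            _ ≤ P ((⋃ k, s k) \ Set.accumulate s K)
                  + P (⋃ k ∈ Finset.range (K + 1), symmDiff (s k) (Af k)) :=
                measure_union_le _ _
            _ ≤ ENNReal.ofReal (δ / 2)
                  + ∑ k ∈ Finset.range (K + 1), P (symmDiff (s k) (Af k)) :=
                add_le_add htail (measure_biUnion_finset_le _ _)
            _ ≤ ENNReal.ofReal (δ / 2)
                  + ∑ k ∈ Finset.range (K + 1), ENNReal.ofReal (δ / (2 * (K + 1))) :=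
                add_le_add le_rfl (Finset.sum_le_sum fun k _ => hPf k)
            _ = ENNReal.ofReal (δ / 2)
                  + ((K + 1 : ℕ) : ℝ≥0∞) * ENNReal.ofReal (δ / (2 * (K + 1))) := by
                rw [Finset.sum_const, Finset.card_range, nsmul_eq_mul]
            _ = ENNReal.ofReal δ := by
                rw [show ((K + 1 : ℕ) : ℝ≥0∞) = ENNReal.ofReal ((K + 1 : ℕ) : ℝ) from
                    (ENNReal.ofReal_natCast _).symm,
                  ← ENNReal.ofReal_mul (by positivity),
                  ← ENNReal.ofReal_add (by positivity) (by positivity)]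
                congr 1
                have hK1 : ((K + 1 : ℕ) : ℝ) ≠ 0 := by positivity
                push_cast
                field_simp
                ring }
    with hD
  have hle' : (⨆ n, m n) ≤ D := iSup_le fun n S hS =>
    ⟨(le_iSup m n : m n ≤ ⨆ n, m n) S hS, fun δ hδ =>
      ⟨n, S, hS, by simp [symmDiff_self, Set.bot_eq_empty]⟩⟩
  obtain ⟨-, h2⟩ := hle' A hA
  exact h2 ε hε

lemma abs_toReal_sub_le (X Y : Set Ω) :
    |(P X).toReal - (P Y).toReal| ≤ (P (symmDiff X Y)).toReal := by
  have hsub : ∀ U V : Set Ω, P U ≤ P V + P (symmDiff U V) := by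
    intro U V
    refine le_trans (measure_mono ?_) (measure_union_le _ _)
    intro ω hω
    by_cases h : ω ∈ V
    · exact Or.inl h
    · exact Or.inr (Set.mem_symmDiff.mpr (Or.inl ⟨hω, h⟩))
  have k1 : (P X).toReal ≤ (P Y).toReal + (P (symmDiff X Y)).toReal := by
    rw [← ENNReal.toReal_add (measure_ne_top P _) (measure_ne_top P _)]
    exact ENNReal.toReal_mono (by finiteness) (hsub X Y)
  have k2 : (P Y).toReal ≤ (P X).toReal + (P (symmDiff X Y)).toReal := by
    rw [← ENNReal.toReal_add (measure_ne_top P _) (measure_ne_top P _)]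
    refine ENNReal.toReal_mono (by finiteness) ?_
    rw [symmDiff_comm]
    exact hsub Y X
  rw [abs_le]
  constructor <;> linarith

lemma symmDiff_inter_subset (A A' B B' : Set Ω) :
    symmDiff (A ∩ B) (A' ∩ B') ⊆ symmDiff A A' ∪ symmDiff B B' := by
  intro ω hω
  simp only [Set.mem_symmDiff, Set.mem_inter_iff, Set.mem_union] at hω ⊢
  tauto

end Proof15


/-- if the σ-fields `𝒜 n ⊔ 𝒝 n` are independent, then
`α(⋁ 𝒜 n, ⋁ 𝒝 n) ≤ Σ α(𝒜 n, 𝒝 n)`. -/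
theorem alpha_iSup_le_tsum
    {Ω : Type*} {mΩ : MeasurableSpace Ω} (P : Measure Ω) [IsProbabilityMeasure P]
    (𝒜 𝒝 : ℕ → MeasurableSpace Ω) (h𝒜 : ∀ n, 𝒜 n ≤ mΩ) (h𝒝 : ∀ n, 𝒝 n ≤ mΩ)
    (hindep : ProbabilityTheory.iIndep (fun n => 𝒜 n ⊔ 𝒝 n) P) :
    alphaDep P (⨆ n, 𝒜 n) (⨆ n, 𝒝 n) ≤ ∑' n, alphaDep P (𝒜 n) (𝒝 n) := by
  classical
  set S := ∑' n, alphaDep P (𝒜 n) (𝒝 n) with hSdef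
  simp only [alphaDep]
  refine iSup₂_le fun A hA => iSup₂_le fun B hB => ?_
  set F𝒜 : ℕ → MeasurableSpace Ω := fun N => (Finset.range N).sup 𝒜 with hF𝒜
  set F𝒝 : ℕ → MeasurableSpace Ω := fun N => (Finset.range N).sup 𝒝 with hF𝒝
  have hmono𝒜 : Monotone F𝒜 := fun a b hab => Finset.sup_mono (Finset.range_subset_range.mpr hab)
  have hmono𝒝 : Monotone F𝒝 := fun a b hab => Finset.sup_mono (Finset.range_subset_range.mpr hab)
  have hle𝒜 : ∀ N, F𝒜 N ≤ mΩ := fun N => Finset.sup_le fun n _ => h𝒜 n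
  have hle𝒝 : ∀ N, F𝒝 N ≤ mΩ := fun N => Finset.sup_le fun n _ => h𝒝 n
  have hA' : MeasurableSet[⨆ N, F𝒜 N] A := by
    refine (iSup_le fun n => ?_ : (⨆ n, 𝒜 n) ≤ ⨆ N, F𝒜 N) A hA
    calc 𝒜 n ≤ F𝒜 (n + 1) := Finset.le_sup (Finset.self_mem_range_succ n)
      _ ≤ ⨆ N, F𝒜 N := le_iSup F𝒜 (n + 1)
  have hB' : MeasurableSet[⨆ N, F𝒝 N] B := by
    refine (iSup_le fun n => ?_ : (⨆ n, 𝒝 n) ≤ ⨆ N, F𝒝 N) B hB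
    calc 𝒝 n ≤ F𝒝 (n + 1) := Finset.le_sup (Finset.self_mem_range_succ n)
      _ ≤ ⨆ N, F𝒝 N := le_iSup F𝒝 (n + 1)
  refine ENNReal.le_of_forall_pos_le_add fun ε hε hStop => ?_
  have hεr : (0 : ℝ) < (ε : ℝ) := hε
  have hε4 : (0 : ℝ) < (ε : ℝ) / 4 := by positivity
  obtain ⟨N₁, A', hA'm, hPA⟩ := approx_lemma P hmono𝒜 hle𝒜 hA' hε4
  obtain ⟨N₂, B', hB'm, hPB⟩ := approx_lemma P hmono𝒝 hle𝒝 hB' hε4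
  set N := max N₁ N₂ with hN
  have hA'm' : MeasurableSet[F𝒜 N] A' := hmono𝒜 (le_max_left _ _) _ hA'm
  have hB'm' : MeasurableSet[F𝒝 N] B' := hmono𝒝 (le_max_right _ _) _ hB'm
  have hkey : ENNReal.ofReal |(P (A' ∩ B')).toReal - (P A').toReal * (P B').toReal| ≤ S := by
    refine le_trans (le_alphaDep P hA'm' hB'm') ?_
    refine le_trans (alphaDep_finite P 𝒜 𝒝 h𝒜 h𝒝 hindep N) ?_
    exact ENNReal.sum_le_tsum _
  have hPAr : (P (symmDiff A A')).toReal ≤ (ε : ℝ) / 4 := by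
    have h := ENNReal.toReal_mono ENNReal.ofReal_ne_top hPA
    rwa [ENNReal.toReal_ofReal hε4.le] at h
  have hPBr : (P (symmDiff B B')).toReal ≤ (ε : ℝ) / 4 := by
    have h := ENNReal.toReal_mono ENNReal.ofReal_ne_top hPB
    rwa [ENNReal.toReal_ofReal hε4.le] at h
  have hb1 : ∀ X : Set Ω, (P X).toReal ≤ 1 := fun X => by
    simpa using ENNReal.toReal_mono one_ne_top (prob_le_one (μ := P) (s := X))
  have hb0 : ∀ X : Set Ω, 0 ≤ (P X).toReal := fun X => ENNReal.toReal_nonneg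
  set p := (P (A ∩ B)).toReal with hp
  set q := (P A).toReal * (P B).toReal with hq
  set p' := (P (A' ∩ B')).toReal with hp'
  set q' := (P A').toReal * (P B').toReal with hq'
  have e1 : |p - p'| ≤ (ε : ℝ) / 4 + (ε : ℝ) / 4 := by
    calc |p - p'| ≤ (P (symmDiff (A ∩ B) (A' ∩ B'))).toReal := abs_toReal_sub_le P _ _
      _ ≤ ((P (symmDiff A A') + P (symmDiff B B'))).toReal := by
          refine ENNReal.toReal_mono (by finiteness) ?_
          exact le_trans (measure_mono (symmDiff_inter_subset A A' B B'))
            (measure_union_le _ _)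
      _ = (P (symmDiff A A')).toReal + (P (symmDiff B B')).toReal :=
          ENNReal.toReal_add (measure_ne_top P _) (measure_ne_top P _)
      _ ≤ (ε : ℝ) / 4 + (ε : ℝ) / 4 := add_le_add hPAr hPBr
  have d1 : |(P A).toReal - (P A').toReal| ≤ (ε : ℝ) / 4 :=
    (abs_toReal_sub_le P A A').trans hPAr
  have d2 : |(P B).toReal - (P B').toReal| ≤ (ε : ℝ) / 4 :=
    (abs_toReal_sub_le P B B').trans hPBr
  have e2 : |q - q'| ≤ (ε : ℝ) / 4 + (ε : ℝ) / 4 := by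
    rw [hq, hq']
    calc |(P A).toReal * (P B).toReal - (P A').toReal * (P B').toReal|
        = |((P A).toReal - (P A').toReal) * (P B).toReal
            + (P A').toReal * ((P B).toReal - (P B').toReal)| := by congr 1; ring
      _ ≤ |((P A).toReal - (P A').toReal) * (P B).toReal|
            + |(P A').toReal * ((P B).toReal - (P B').toReal)| := abs_add_le _ _
      _ = |(P A).toReal - (P A').toReal| * |(P B).toReal|
            + |(P A').toReal| * |(P B).toReal - (P B').toReal| := by rw [abs_mul, abs_mul]
      _ ≤ |(P A).toReal - (P A').toReal| * 1 + 1 * |(P B).toReal - (P B').toReal| := by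
          refine add_le_add (mul_le_mul_of_nonneg_left ?_ (abs_nonneg _))
            (mul_le_mul_of_nonneg_right ?_ (abs_nonneg _))
          · rw [abs_of_nonneg (hb0 B)]; exact hb1 B
          · rw [abs_of_nonneg (hb0 A')]; exact hb1 A'
      _ ≤ (ε : ℝ) / 4 + (ε : ℝ) / 4 := by
          rw [mul_one, one_mul]; exact add_le_add d1 d2
  have htri : |p - q| ≤ |p' - q'| + (ε : ℝ) := by
    have h1 : |(p - q) - (p' - q')| ≤ |p - p'| + |q - q'| := by
      calc |(p - q) - (p' - q')| = |(p - p') + -(q - q')| := by congr 1; ring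
        _ ≤ |p - p'| + |-(q - q')| := abs_add_le _ _
        _ = |p - p'| + |q - q'| := by rw [abs_neg]
    calc |p - q| = |(p' - q') + ((p - q) - (p' - q'))| := by congr 1; ring
      _ ≤ |p' - q'| + |(p - q) - (p' - q')| := abs_add_le _ _
      _ ≤ |p' - q'| + (|p - p'| + |q - q'|) := by linarith
      _ ≤ |p' - q'| + (ε : ℝ) := by linarith
  calc ENNReal.ofReal |p - q| ≤ ENNReal.ofReal (|p' - q'| + (ε : ℝ)) :=
        ENNReal.ofReal_le_ofReal htri
    _ = ENNReal.ofReal |p' - q'| + ENNReal.ofReal (ε : ℝ) :=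
        ENNReal.ofReal_add (abs_nonneg _) hεr.le
    _ ≤ S + ENNReal.ofReal (ε : ℝ) := add_le_add hkey le_rfl
    _ = S + ε := by rw [ENNReal.ofReal_coe_nnreal]


end StrongMixing
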